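/- Let H be a hypergraph in which every hyperedge has size at least 2 and every pair of distinct hyperedges has empty intersection or intersects in at least 2 vertices. Suppose additionally every hyperedge has size at least c and every family of at most c hyperedges with nonempty common intersection meets in at least c vertices. Then in any 2-coloring of the vertices, the number of monochromatic hyperedges can be strictly decreased by recoloring a single vertex, unless the coloring is already proper. In particular, a coloring minimizing the number of monochromatic hyperedges is proper. -/
import Mathlib


/-- Recoloring lemma: in a hypergraph where every hyperedge has size at least 2 and
`c`, distinct hyperedges intersect in 0 or at least 2 vertices, and every family of at
most `c` hyperedges with nonempty common intersection meets in at least `c` vertices,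
for every 2-coloring that has a monochromatic hyperedge some single-vertex recoloring
strictly decreases the number of monochromatic hyperedges; in particular a coloring
minimizing the number of monochromatic hyperedges is proper. -/
theorem stmt18 {V : Type*} [Fintype V] [DecidableEq V]
    (c : ℕ) (E : Finset (Finset V))
    (hsize2 : ∀ e ∈ E, 2 ≤ e.card)
    (hpair : ∀ e₁ ∈ E, ∀ e₂ ∈ E, e₁ ≠ e₂ → e₁ ∩ e₂ = ∅ ∨ 2 ≤ (e₁ ∩ e₂).card)
    (hsizec : ∀ e ∈ E, c ≤ e.card)
    (hc : ∀ S : Finset (Finset V), S ⊆ E → S.Nonempty → S.card ≤ c →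
      (S.inf id).Nonempty → c ≤ (S.inf id).card) :
    (∀ f : V → Bool, (∃ e ∈ E, (e.image f).card = 1) →
      ∃ v : V,
        (E.filter (fun e => (e.image (Function.update f v (!(f v)))).card = 1)).card <
        (E.filter (fun e => (e.image f).card = 1)).card) ∧
    (∀ f : V → Bool,
      (∀ g : V → Bool,
        (E.filter (fun e => (e.image f).card = 1)).card ≤
        (E.filter (fun e => (e.image g).card = 1)).card) →
      ∀ e ∈ E, (e.image f).card ≠ 1) := by
  have hmono : ∀ (f : V → Bool) (e : Finset V), e.Nonempty →
      ((e.image f).card = 1 ↔ ∃ b, ∀ x ∈ e, f x = b) := by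
    intro f e he
    rw [Finset.card_eq_one]
    constructor
    · rintro ⟨b, hb⟩
      refine ⟨b, fun x hx => ?_⟩
      have := Finset.mem_image_of_mem f hx
      rw [hb, Finset.mem_singleton] at this; exact this
    · rintro ⟨b, hb⟩
      refine ⟨b, Finset.eq_singleton_iff_nonempty_unique_mem.mpr ⟨he.image f, ?_⟩⟩
      intro y hy
      obtain ⟨x, hx, rfl⟩ := Finset.mem_image.mp hy
      exact hb x hx
  have main : ∀ f : V → Bool, (∃ e ∈ E, (e.image f).card = 1) →
      ∃ v : V,
        (E.filter (fun e => (e.image (Function.update f v (!(f v)))).card = 1)).card <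
        (E.filter (fun e => (e.image f).card = 1)).card := by
    rintro f ⟨e₀, he₀E, he₀m⟩
    have h2 := hsize2 e₀ he₀E
    have he₀ne : e₀.Nonempty := Finset.card_pos.mp (by omega)
    obtain ⟨b, hb⟩ := (hmono f e₀ he₀ne).mp he₀m
    obtain ⟨v, hv⟩ := he₀ne
    obtain ⟨w, hw, hwv⟩ := Finset.exists_mem_ne (s := e₀) (by omega) v
    refine ⟨v, Finset.card_lt_card ?_⟩
    set g := Function.update f v (!(f v)) with hg
    have hgv : g v = !b := by simp [hg, Function.update_self, hb v hv]
    have hgne : ∀ x, x ≠ v → g x = f x := fun x hx => Function.update_of_ne hx _ _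
    constructor
    · -- subset
      intro e he
      rw [Finset.mem_filter] at he ⊢
      obtain ⟨heE, hem⟩ := he
      refine ⟨heE, ?_⟩
      have hene : e.Nonempty := Finset.card_pos.mp (by have := hsize2 e heE; omega)
      obtain ⟨b', hb'⟩ := (hmono g e hene).mp hem
      by_cases hve : v ∈ e
      · -- would be newly monochromatic: contradiction
        exfalso
        have hb'' : b' = !b := by rw [← hb' v hve, hgv]
        have hfx : ∀ x ∈ e, x ≠ v → f x = !b := by
          intro x hx hxv
          rw [← hgne x hxv, hb' x hx, hb'']
        have hne : e ≠ e₀ := by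
          rintro rfl
          have := hfx w hw hwv
          rw [hb w hw] at this
          simp at this
        rcases hpair e heE e₀ he₀E hne with h | h
        · exact absurd (Finset.mem_inter.mpr ⟨hve, hv⟩) (by simp [h])
        · have : e ∩ e₀ = {v} := by
            apply Finset.eq_singleton_iff_nonempty_unique_mem.mpr
            refine ⟨⟨v, Finset.mem_inter.mpr ⟨hve, hv⟩⟩, ?_⟩
            intro x hx
            rw [Finset.mem_inter] at hx
            by_contra hxv
            have h1 := hfx x hx.1 hxv
            have h2 := hb x hx.2
            rw [h2] at h1; simp at h1
          rw [this] at h; simp at h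
      · -- v not in e: images agree
        rw [hmono f e hene]
        exact ⟨b', fun x hx => by rw [← hgne x (fun h => hve (h ▸ hx)), hb' x hx]⟩
    · -- not superset: e₀ in f-filter, not in g-filter
      intro hsup
      have : e₀ ∈ E.filter (fun e => (e.image g).card = 1) :=
        hsup (Finset.mem_filter.mpr ⟨he₀E, he₀m⟩)
      rw [Finset.mem_filter] at this
      obtain ⟨b', hb'⟩ := (hmono g e₀ ⟨v, hv⟩).mp this.2
      have h1 : b' = !b := by rw [← hb' v hv, hgv]
      have h2 : b' = b := by rw [← hb' w hw, hgne w hwv, hb w hw]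
      rw [h1] at h2; simp at h2
  refine ⟨main, ?_⟩
  intro f hminf e heE hem
  obtain ⟨v, hv⟩ := main f ⟨e, heE, hem⟩
  exact absurd (hminf _) (not_le.mpr hv)
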